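/- Let N be a positive even integer and P a positive integer. For i = 1,…,P let h̃_i be a complex number and let k_i, l_i be integers. Let Φ be the N×N discrete Fresnel transform matrix with entries Φ_{m,n} = (1/√N)·exp(−i·π/4)·exp(i·π·(m−n)²/N), Δ the N×N diagonal matrix with Δ_{n,n} = exp(i·2π·n/N), and Π the N×N cyclic-shift permutation matrix with Π_{m,n} = 1 if m ≡ n+1 (mod N) and 0 otherwise. Let H = Σ_{i=1}^{P} h̃_i·Δ^{k_i}·Π^{l_i} be the time-domain channel matrix. Then the Fresnel-domain channel matrix satisfies Φ·H·Φ^H = Σ_{i=1}^{P} h̃_i·exp(−i·π·k_i²/N)·Δ^{k_i}·Π^{l_i+k_i}. -/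

import Mathlib

open Matrix Complex Real

/-- The N×N discrete Fresnel transform (DFnT) matrix with
Φ_{m,n} = (1/√N)·exp(−i·π/4)·exp(i·π·(m−n)²/N). -/
noncomputable def PhiMat (N : ℕ) : Matrix (Fin N) (Fin N) ℂ :=
  Matrix.of fun m n =>
    (1 / Real.sqrt N : ℂ) * Complex.exp (-(Real.pi / 4) * Complex.I) *
      Complex.exp (Real.pi * Complex.I * (((m : ℕ) : ℤ) - ((n : ℕ) : ℤ)) ^ 2 / N)

/-- The N×N diagonal "Doppler-shift" matrix Δ with Δ_{n,n} = exp(i·2π·n/N). -/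
noncomputable def DeltaMat (N : ℕ) : Matrix (Fin N) (Fin N) ℂ :=
  Matrix.diagonal fun n => Complex.exp (2 * Real.pi * Complex.I * (n : ℕ) / N)

/-- The N×N cyclic-shift permutation matrix Π with Π_{m,n} = 1 if m ≡ n+1 (mod N). -/
def PiMat (N : ℕ) : Matrix (Fin N) (Fin N) ℂ :=
  Matrix.of fun m n => if (m : ℕ) = ((n : ℕ) + 1) % N then 1 else 0

/-! ### Auxiliary definitions -/

noncomputable def eN (N : ℕ) (t : ℤ) : ℂ := Complex.exp (Real.pi * Complex.I * t / N)

noncomputable def Dk (N : ℕ) (k : ℤ) : Matrix (Fin N) (Fin N) ℂ :=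
  Matrix.diagonal fun n => eN N (2 * k * ((n : ℕ) : ℤ))

def Pml (N : ℕ) (l : ℤ) : Matrix (Fin N) (Fin N) ℂ :=
  Matrix.of fun m n => if (((m : ℕ) : ℤ)) % N = ((((n : ℕ) : ℤ)) + l) % N then 1 else 0

lemma eN_add (N : ℕ) (a b : ℤ) : eN N (a + b) = eN N a * eN N b := by
  rw [eN, eN, eN, ← Complex.exp_add]
  congr 1
  push_cast
  ring

lemma eN_zero (N : ℕ) : eN N 0 = 1 := by simp [eN]

lemma eN_two_N_mul (N : ℕ) (hN : (N : ℂ) ≠ 0) (t : ℤ) : eN N (2 * N * t) = 1 := by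
  rw [eN]
  rw [show ((Real.pi : ℂ) * Complex.I * ((2 * (N:ℤ) * t : ℤ) : ℂ) / N) = (t : ℂ) * (2 * Real.pi * Complex.I) by
    push_cast; field_simp]
  exact Complex.exp_int_mul_two_pi_mul_I t

lemma eN_shift (N : ℕ) (hN : (N : ℂ) ≠ 0) (a b t : ℤ) (h : a = b + 2 * N * t) :
    eN N a = eN N b := by
  rw [h, eN_add, eN_two_N_mul N hN t, mul_one]

/-- the canonical representative of `t` mod `N` in `Fin N` -/
def fm (N : ℕ) (hN : 0 < N) (t : ℤ) : Fin N :=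
  ⟨(t % N).toNat, by
    have h1 : 0 ≤ t % N := Int.emod_nonneg t (by exact_mod_cast hN.ne')
    have h2 : t % N < N := Int.emod_lt_of_pos t (by exact_mod_cast hN)
    omega⟩

lemma fm_val (N : ℕ) (hN : 0 < N) (t : ℤ) : (((fm N hN t : ℕ)) : ℤ) = t % N := by
  simp only [fm]
  exact Int.toNat_of_nonneg (Int.emod_nonneg t (by exact_mod_cast hN.ne'))

lemma cond_iff (N : ℕ) (hN : 0 < N) (t : ℤ) (a : Fin N) :
    ((((a : ℕ)) : ℤ) % N = t % N) ↔ a = fm N hN t := by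
  have ha : (((a : ℕ) : ℤ)) % N = ((a : ℕ) : ℤ) :=
    Int.emod_eq_of_lt (by positivity) (by exact_mod_cast a.isLt)
  rw [ha]
  constructor
  · intro h
    apply Fin.ext
    have := fm_val N hN t
    omega
  · intro h
    rw [h, fm_val]

lemma mySumCollapse (N : ℕ) (hN : 0 < N) (t : ℤ) (f : Fin N → ℂ) :
    (∑ a : Fin N, if (((a : ℕ) : ℤ)) % N = t % N then f a else 0) = f (fm N hN t) := by
  have : ∀ a : Fin N, (if (((a : ℕ) : ℤ)) % N = t % N then f a else 0)
      = if a = fm N hN t then f a else 0 := by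
    intro a; exact if_congr (cond_iff N hN t a) rfl rfl
  simp_rw [this]
  simp [Finset.sum_ite_eq']

lemma Dk_mul (N : ℕ) (a b : ℤ) : Dk N a * Dk N b = Dk N (a + b) := by
  rw [Dk, Dk, Dk, Matrix.diagonal_mul_diagonal]
  exact congrArg Matrix.diagonal (funext fun n => by
    rw [← eN_add]; congr 1; ring)

lemma Dk_zero (N : ℕ) : Dk N 0 = 1 := by
  rw [Dk]
  convert Matrix.diagonal_one
  simp [eN]

lemma Dk_one (N : ℕ) : Dk N 1 = DeltaMat N := by
  rw [Dk, DeltaMat]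
  exact congrArg Matrix.diagonal (funext fun n => by
    simp only [eN]; congr 1; push_cast; ring)

lemma Pml_mul (N : ℕ) (hN : 0 < N) (a b : ℤ) : Pml N a * Pml N b = Pml N (a + b) := by
  ext m n
  rw [Matrix.mul_apply]
  simp only [Pml, Matrix.of_apply]
  have step : ∀ c : Fin N,
      ((if (((m : ℕ) : ℤ)) % N = ((((c : ℕ) : ℤ)) + a) % N then (1:ℂ) else 0) *
        (if (((c : ℕ) : ℤ)) % N = ((((n : ℕ) : ℤ)) + b) % N then (1:ℂ) else 0))
      = if c = fm N hN (((n : ℕ) : ℤ) + b) then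
          (if (((m : ℕ) : ℤ)) % N = ((((c : ℕ) : ℤ)) + a) % N then (1:ℂ) else 0) else 0 := by
    intro c
    rw [if_congr (cond_iff N hN ((((n : ℕ) : ℤ)) + b) c) rfl rfl]
    by_cases hc : c = fm N hN (((n : ℕ) : ℤ) + b) <;> simp [hc]
  rw [Finset.sum_congr rfl (fun c _ => step c), Finset.sum_ite_eq']
  simp only [Finset.mem_univ, if_true]
  have hv := fm_val N hN (((n : ℕ) : ℤ) + b)
  rw [hv, Int.emod_add_emod,
    show ((((n : ℕ) : ℤ)) + b + a) = (((n : ℕ) : ℤ)) + (a + b) from by ring]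

lemma Pml_zero (N : ℕ) (hN : 0 < N) : Pml N 0 = 1 := by
  ext m n
  have hm : (((m : ℕ) : ℤ)) % N = ((m : ℕ) : ℤ) :=
    Int.emod_eq_of_lt (by positivity) (by exact_mod_cast m.isLt)
  have hn : (((n : ℕ) : ℤ)) % N = ((n : ℕ) : ℤ) :=
    Int.emod_eq_of_lt (by positivity) (by exact_mod_cast n.isLt)
  simp only [Pml, Matrix.of_apply, add_zero, hm, hn, Matrix.one_apply]
  have : ((((m : ℕ) : ℤ)) = (((n : ℕ) : ℤ))) ↔ m = n := by
    constructor
    · intro h; exact Fin.ext (by exact_mod_cast h)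
    · intro h; rw [h]
  rw [if_congr this rfl rfl]

lemma Pml_one (N : ℕ) (hN : 0 < N) : Pml N 1 = PiMat N := by
  ext m n
  simp only [Pml, PiMat, Matrix.of_apply]
  congr 1
  have hm : (((m : ℕ) : ℤ)) % N = ((m : ℕ) : ℤ) :=
    Int.emod_eq_of_lt (by positivity) (by exact_mod_cast m.isLt)
  rw [hm, eq_iff_iff]
  have : ((((n : ℕ) : ℤ)) + 1) % N = ((((n : ℕ) + 1) % N : ℕ) : ℤ) := by
    push_cast
    rfl
  rw [this]
  exact_mod_cast Iff.rfl

lemma zpow_of_hom {n : ℕ} (A : Matrix (Fin n) (Fin n) ℂ) (f : ℤ → Matrix (Fin n) (Fin n) ℂ)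
    (h0 : f 0 = 1) (h1 : f 1 = A) (hadd : ∀ a b : ℤ, f a * f b = f (a + b)) :
    ∀ k : ℤ, A ^ k = f k := by
  have hnat : ∀ m : ℕ, A ^ m = f m := by
    intro m
    induction m with
    | zero => simpa using h0.symm
    | succ m ih =>
      rw [pow_succ, ih, ← h1, hadd]
      norm_cast
  intro k
  rcases k with m | m
  · show A ^ (m : ℤ) = _
    rw [zpow_natCast, hnat]
    norm_cast
  · rw [zpow_negSucc, hnat]
    apply Matrix.inv_eq_right_inv
    rw [hadd]
    have : ((m + 1 : ℕ) : ℤ) + Int.negSucc m = 0 := by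
      rw [Int.negSucc_eq]; push_cast; ring
    rw [this, h0]

lemma Delta_zpow (N : ℕ) (k : ℤ) : DeltaMat N ^ k = Dk N k :=
  zpow_of_hom (DeltaMat N) (Dk N) (Dk_zero N) (Dk_one N) (Dk_mul N) k

lemma Pi_zpow (N : ℕ) (hN : 0 < N) (l : ℤ) : PiMat N ^ l = Pml N l :=
  zpow_of_hom (PiMat N) (Pml N) (Pml_zero N hN) (Pml_one N hN) (Pml_mul N hN) l


lemma eN_conj (N : ℕ) (t : ℤ) : (starRingEnd ℂ) (eN N t) = eN N (-t) := by
  rw [eN, eN, ← Complex.exp_conj]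
  congr 1
  simp only [map_div₀, _root_.map_mul, Complex.conj_I, Complex.conj_ofReal, map_intCast,
    map_natCast]
  push_cast
  ring

lemma key (N : ℕ) (hN : 0 < N) (hNeven : Even N) (k l : ℤ) :
    PhiMat N * (Dk N k * Pml N l) * (PhiMat N)ᴴ =
      Complex.exp (-(Real.pi * Complex.I * (k : ℂ) ^ 2 / N)) • (Dk N k * Pml N (l + k)) := by
  have hNC : (N : ℂ) ≠ 0 := Nat.cast_ne_zero.mpr hN.ne'
  have hNZ : (N : ℤ) ≠ 0 := by exact_mod_cast hN.ne'
  obtain ⟨s, hs⟩ := hNeven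
  have hNs : (N : ℤ) = 2 * (s : ℤ) := by exact_mod_cast (by omega : N = 2 * s)
  have hπI : (Real.pi : ℂ) * Complex.I ≠ 0 :=
    mul_ne_zero (Complex.ofReal_ne_zero.mpr Real.pi_ne_zero) Complex.I_ne_zero
  set c : ℂ := (1 / Real.sqrt N : ℂ) * Complex.exp (-(Real.pi / 4) * Complex.I) with hc
  have hPhi : ∀ p q : Fin N, PhiMat N p q = c * eN N ((((p:ℕ):ℤ) - ((q:ℕ):ℤ))^2) := by
    intro p q
    rw [PhiMat]
    simp only [Matrix.of_apply]
    rw [hc, eN]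
    congr 2
    push_cast
    ring
  have hcc : c * (starRingEnd ℂ) c = (1 : ℂ) / N := by
    rw [hc, _root_.map_mul, ← Complex.exp_conj]
    have h1 : (starRingEnd ℂ) (1 / (Real.sqrt N : ℂ)) = 1 / (Real.sqrt N : ℂ) := by
      rw [map_div₀, _root_.map_one, Complex.conj_ofReal]
    have h2 : (starRingEnd ℂ) (-(Real.pi / 4 : ℂ) * Complex.I)
        = (Real.pi / 4 : ℂ) * Complex.I := by
      rw [show (-(Real.pi / 4 : ℂ) * Complex.I) = ((-(Real.pi/4) : ℝ) : ℂ) * Complex.I from by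
        push_cast; ring, _root_.map_mul, Complex.conj_I, Complex.conj_ofReal]
      push_cast
      ring
    rw [h1, h2]
    have hsq : (Real.sqrt N : ℂ) * (Real.sqrt N : ℂ) = (N : ℂ) := by
      norm_cast
      exact Real.mul_self_sqrt (Nat.cast_nonneg N)
    rw [show (1 / (Real.sqrt N : ℂ) * Complex.exp (-(Real.pi / 4) * Complex.I)) *
        (1 / (Real.sqrt N : ℂ) * Complex.exp ((Real.pi / 4 : ℂ) * Complex.I))
        = (1 / ((Real.sqrt N : ℂ) * (Real.sqrt N : ℂ))) *
          (Complex.exp (-(Real.pi / 4) * Complex.I) * Complex.exp ((Real.pi / 4 : ℂ) * Complex.I))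
        from by ring, hsq, ← Complex.exp_add]
    norm_num
  ext m n
  -- notation
  have hinner : ∀ b : Fin N, (PhiMat N * (Dk N k * Pml N l)) m b
      = PhiMat N m (fm N hN (((b:ℕ):ℤ) + l)) *
          eN N (2 * k * (((fm N hN (((b:ℕ):ℤ) + l) : ℕ)):ℤ)) := by
    intro b
    rw [Matrix.mul_apply]
    have step : ∀ a : Fin N, PhiMat N m a * (Dk N k * Pml N l) a b
        = (if (((a:ℕ):ℤ)) % N = ((((b:ℕ):ℤ)) + l) % N
            then PhiMat N m a * eN N (2 * k * ((a:ℕ):ℤ)) else 0) := by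
      intro a
      rw [Dk, Matrix.diagonal_mul]
      simp only [Pml, Matrix.of_apply]
      by_cases hab : (((a:ℕ):ℤ)) % N = ((((b:ℕ):ℤ)) + l) % N <;> simp [hab] <;> ring
    rw [Finset.sum_congr rfl (fun a _ => step a),
      mySumCollapse N hN ((((b:ℕ):ℤ)) + l) (fun a => PhiMat N m a * eN N (2 * k * ((a:ℕ):ℤ)))]
  rw [Matrix.mul_apply, Finset.sum_congr rfl (fun b _ => by rw [hinner b])]
  have hterm : ∀ b : Fin N,
      (PhiMat N m (fm N hN (((b:ℕ):ℤ) + l)) *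
          eN N (2 * k * (((fm N hN (((b:ℕ):ℤ) + l) : ℕ)):ℤ))) * (PhiMat N)ᴴ b n
      = ((1:ℂ)/N * eN N ((((m:ℕ):ℤ) - l)^2 - ((n:ℕ):ℤ)^2 + 2*k*l)) *
          (eN N (2 * (((n:ℕ):ℤ) + l + k - ((m:ℕ):ℤ)))) ^ (b:ℕ) := by
    intro b
    set a0 : Fin N := fm N hN (((b:ℕ):ℤ) + l) with ha0def
    have ha0 : ((a0 : ℕ) : ℤ) = ((((b:ℕ):ℤ)) + l) - N * (((((b:ℕ):ℤ)) + l) / N) := by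
      rw [ha0def, fm_val]
      exact Int.emod_def _ _
    rw [Matrix.conjTranspose_apply, hPhi, hPhi]
    rw [show star (c * eN N ((((n:ℕ):ℤ) - ((b:ℕ):ℤ))^2))
        = (starRingEnd ℂ) c * (starRingEnd ℂ) (eN N ((((n:ℕ):ℤ) - ((b:ℕ):ℤ))^2)) from
      _root_.map_mul (starRingEnd ℂ) _ _, eN_conj]
    rw [show (c * eN N ((((m:ℕ):ℤ) - ((a0:ℕ):ℤ))^2) * eN N (2 * k * ((a0:ℕ):ℤ))) *
        ((starRingEnd ℂ) c * eN N (-((((n:ℕ):ℤ) - ((b:ℕ):ℤ))^2)))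
        = (c * (starRingEnd ℂ) c) *
          (eN N ((((m:ℕ):ℤ) - ((a0:ℕ):ℤ))^2) * eN N (2 * k * ((a0:ℕ):ℤ)) *
            eN N (-((((n:ℕ):ℤ) - ((b:ℕ):ℤ))^2))) from by ring, hcc]
    rw [← eN_add, ← eN_add]
    have hE : eN N ((((m:ℕ):ℤ) - ((a0:ℕ):ℤ))^2 + 2 * k * ((a0:ℕ):ℤ) +
          -((((n:ℕ):ℤ) - ((b:ℕ):ℤ))^2))
        = eN N (((((m:ℕ):ℤ) - l)^2 - ((n:ℕ):ℤ)^2 + 2*k*l) +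
            2 * (((n:ℕ):ℤ) + l + k - ((m:ℕ):ℤ)) * ((b:ℕ):ℤ)) := by
      apply eN_shift N hNC _ _
        (((((b:ℕ):ℤ)) + l) / N * (((m:ℕ):ℤ) - (((b:ℕ):ℤ) + l))
          + (s:ℤ) * ((((b:ℕ):ℤ) + l) / N)^2 - k * ((((b:ℕ):ℤ) + l) / N))
      rw [ha0, hNs]
      ring
    rw [hE, eN_add]
    have hpow : eN N (2 * (((n:ℕ):ℤ) + l + k - ((m:ℕ):ℤ)) * ((b:ℕ):ℤ))
        = (eN N (2 * (((n:ℕ):ℤ) + l + k - ((m:ℕ):ℤ)))) ^ (b:ℕ) := by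
      rw [eN, eN, ← Complex.exp_nat_mul]
      congr 1
      push_cast
      ring
    rw [hpow]
    ring
  rw [Finset.sum_congr rfl (fun b _ => hterm b), ← Finset.mul_sum,
    Fin.sum_univ_eq_sum_range (fun j => (eN N (2 * (((n:ℕ):ℤ) + l + k - ((m:ℕ):ℤ)))) ^ j) N]
  -- RHS entry
  rw [Matrix.smul_apply, Dk, Matrix.diagonal_mul]
  simp only [Pml, Matrix.of_apply, smul_eq_mul]
  by_cases hd : (((n:ℕ):ℤ) + l + k - ((m:ℕ):ℤ)) % N = 0
  · -- divisible case
    obtain ⟨t, ht⟩ := Int.dvd_of_emod_eq_zero hd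
    have hz1 : eN N (2 * (((n:ℕ):ℤ) + l + k - ((m:ℕ):ℤ))) = 1 := by
      rw [show 2 * (((n:ℕ):ℤ) + l + k - ((m:ℕ):ℤ)) = 2 * N * t from by rw [ht]; ring]
      exact eN_two_N_mul N hNC t
    rw [hz1]
    simp only [one_pow, Finset.sum_const, Finset.card_range, nsmul_eq_mul, mul_one]
    have hcond : (((m:ℕ):ℤ)) % N = ((((n:ℕ):ℤ)) + (l + k)) % N := by
      rw [Int.emod_eq_emod_iff_emod_sub_eq_zero]
      have : (((m:ℕ):ℤ)) - (((n:ℕ):ℤ) + (l + k)) = N * (-t) := by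
        rw [show ((N:ℤ)) * (-t) = -((N:ℤ) * t) from by ring, ← ht]; ring
      rw [this]
      exact Int.mul_emod_right _ _
    rw [if_pos hcond, mul_one]
    have hexp : Complex.exp (-(Real.pi * Complex.I * (k : ℂ) ^ 2 / N)) = eN N (-(k^2)) := by
      rw [eN]
      congr 1
      push_cast
      ring
    rw [hexp, ← eN_add]
    have hC : eN N ((((m:ℕ):ℤ) - l)^2 - ((n:ℕ):ℤ)^2 + 2*k*l)
        = eN N (-(k^2) + 2 * k * ((m:ℕ):ℤ)) := by
      apply eN_shift N hNC _ _ (-(t * (((m:ℕ):ℤ) - l - k)) - (s:ℤ) * t^2)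
      have hni : ((n:ℕ):ℤ) = ((m:ℕ):ℤ) - l - k + N * t := by linarith [ht]
      rw [hni, hNs]
      ring
    rw [hC]
    field_simp
  · -- non-divisible case
    have hzne : eN N (2 * (((n:ℕ):ℤ) + l + k - ((m:ℕ):ℤ))) ≠ 1 := by
      intro hz1
      rw [eN, Complex.exp_eq_one_iff] at hz1
      obtain ⟨t, ht⟩ := hz1
      rw [div_eq_iff hNC] at ht
      have ht2 : (Real.pi : ℂ) * Complex.I *
            ((2 * (((n:ℕ):ℤ) + l + k - ((m:ℕ):ℤ)) : ℤ) : ℂ)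
          = (Real.pi : ℂ) * Complex.I * ((2 * t * N : ℤ) : ℂ) := by
        rw [ht]; push_cast; ring
      have ht3 := mul_left_cancel₀ hπI ht2
      have ht4 : 2 * (((n:ℕ):ℤ) + l + k - ((m:ℕ):ℤ)) = 2 * t * (N:ℤ) := by
        exact_mod_cast ht3
      apply hd
      rw [show (((n:ℕ):ℤ) + l + k - ((m:ℕ):ℤ)) = t * N from by linarith]
      exact Int.mul_emod_left t N
    have hzN : (eN N (2 * (((n:ℕ):ℤ) + l + k - ((m:ℕ):ℤ)))) ^ N = 1 := by
      rw [eN, ← Complex.exp_nat_mul]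
      rw [show (N:ℂ) * ((Real.pi : ℂ) * Complex.I *
            ((2 * (((n:ℕ):ℤ) + l + k - ((m:ℕ):ℤ)) : ℤ) : ℂ) / N)
          = (((((n:ℕ):ℤ) + l + k - ((m:ℕ):ℤ)) : ℤ) : ℂ) * (2 * Real.pi * Complex.I) from by
        field_simp; push_cast; ring]
      exact Complex.exp_int_mul_two_pi_mul_I _
    rw [geom_sum_eq hzne N, hzN]
    simp only [sub_self, zero_div, mul_zero]
    have hcond : ¬ ((((m:ℕ):ℤ)) % N = ((((n:ℕ):ℤ)) + (l + k)) % N) := by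
      intro hcc2
      apply hd
      rw [Int.emod_eq_emod_iff_emod_sub_eq_zero] at hcc2
      obtain ⟨t, ht⟩ := Int.dvd_of_emod_eq_zero hcc2
      rw [show (((n:ℕ):ℤ) + l + k - ((m:ℕ):ℤ)) = N * (-t) from by linarith]
      exact Int.mul_emod_right _ _
    rw [if_neg hcond]
    ring

theorem stmt10 (N : ℕ) (hN : 0 < N) (hNeven : Even N) (P : ℕ) (hP : 0 < P)
    (h : Fin P → ℂ) (k l : Fin P → ℤ)
    (H : Matrix (Fin N) (Fin N) ℂ)
    (hH : H = ∑ i : Fin P, h i • (DeltaMat N ^ k i * PiMat N ^ l i)) :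
    PhiMat N * H * (PhiMat N)ᴴ =
      ∑ i : Fin P,
        (h i * Complex.exp (-(Real.pi * Complex.I * (k i : ℂ) ^ 2 / N))) •
          (DeltaMat N ^ k i * PiMat N ^ (l i + k i)) := by
  subst hH
  rw [Matrix.mul_sum, Matrix.sum_mul]
  refine Finset.sum_congr rfl fun i _ => ?_
  rw [Delta_zpow, Pi_zpow N hN, Pi_zpow N hN]
  rw [Matrix.mul_smul, Matrix.smul_mul, key N hN hNeven (k i) (l i), smul_smul]
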